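/- Let 0 ≤ k ≤ m and let (ν; μ) be an m-standard composite partition with l(ν) = k and l(μ) + l(ν) = m. Let λ := (μ_1, …, μ_{m−k}, 1−ν_k, 1−ν_{k−1}, …, 1−ν_1), an integral dominant weight of size m. Then in F: s_λ · Σ_{i=0}^{m} e_i(x) · y^{m−i−k} = Σ_{(α,β)} e_m(x) · s_{α ∪_m β̄} · y^{a−b}, where the sum runs over all pairs of partitions (α, β) with μ_i − α_i ∈ {0,1} for all i ≥ 1 and ν_i − β_i ∈ {0,1} for all i ≥ 1 (so l(α) ≤ m−k and l(β) ≤ k), and a := |μ| − |α|, b := |ν| − |β|. -/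

import Mathlib

open scoped Classical

noncomputable section

/-- The field `F = ℚ(x_1, …, x_m, y)` of rational functions in `m+1` indeterminates. -/
abbrev F (m : ℕ) : Type := FractionRing (MvPolynomial (Option (Fin m)) ℚ)

/-- The variable `x_i` as an element of `F`. -/
def Xv (m : ℕ) (i : Fin m) : F m :=
  algebraMap (MvPolynomial (Option (Fin m)) ℚ) (F m) (MvPolynomial.X (some i))

/-- The variable `y` as an element of `F`. -/
def Yv (m : ℕ) : F m :=
  algebraMap (MvPolynomial (Option (Fin m)) ℚ) (F m) (MvPolynomial.X none)

/-- `a_α = ∑_{w ∈ S_m} ε(w) · w(x₁^{α₁} ⋯ x_m^{α_m})`, where `w` permutes the variables. -/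
def aAlt (m : ℕ) (α : Fin m → ℤ) : F m :=
  ∑ w : Equiv.Perm (Fin m), (Equiv.Perm.sign w : ℤ) • ∏ i, Xv m (w i) ^ α i

/-- `δ = (m-1, m-2, …, 1, 0)`. -/
def deltaW (m : ℕ) : Fin m → ℤ := fun i => (m : ℤ) - 1 - (i : ℕ)

/-- The Schur function `s_λ = a_{λ+δ} / a_δ` of an integral dominant weight. -/
def schurW (m : ℕ) (lam : Fin m → ℤ) : F m :=
  aAlt m (fun i => lam i + deltaW m i) / aAlt m (deltaW m)

/-- The elementary symmetric polynomial `e_i(x_1, …, x_m)` in `F`. -/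
def eX (m : ℕ) (i : ℕ) : F m :=
  ∑ s ∈ Finset.powersetCard i (Finset.univ : Finset (Fin m)), ∏ j ∈ s, Xv m j

/-- The complete homogeneous symmetric polynomial `h_r(x_1, …, x_m)` in `F`. -/
def hXF (m : ℕ) (r : ℕ) : F m :=
  ∑ d ∈ (Finset.univ : Finset (Fin m)).sym r, ((d : Multiset (Fin m)).map (Xv m)).prod

/-- `ḣ_r(x) = h_r(x_1⁻¹, …, x_m⁻¹)`. -/
def hdotXF (m : ℕ) (r : ℕ) : F m :=
  ∑ d ∈ (Finset.univ : Finset (Fin m)).sym r,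
    ((d : Multiset (Fin m)).map (fun j => (Xv m j)⁻¹)).prod

/-- `h_r(x)` for `r : ℤ`, with `h_r = 0` for `r < 0`. -/
def hXZ (m : ℕ) (r : ℤ) : F m := if 0 ≤ r then hXF m r.toNat else 0

/-- `ḣ_r(x)` for `r : ℤ`, with `ḣ_r = 0` for `r < 0`. -/
def hdotXZ (m : ℕ) (r : ℤ) : F m := if 0 ≤ r then hdotXF m r.toNat else 0

/-- The complete super-symmetric function `h_r(x/y) = ∑_{k=0}^r h_k(x) y^{r-k}` (`0` for `r < 0`). -/
def hSup (m : ℕ) (r : ℤ) : F m :=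
  if 0 ≤ r then ∑ k ∈ Finset.range (r.toNat + 1), hXF m k * Yv m ^ (r.toNat - k) else 0

/-- `ḣ_r(x/y) = ∑_{k=0}^r ḣ_k(x) y^{-(r-k)}` (`0` for `r < 0`). -/
def hdotSup (m : ℕ) (r : ℤ) : F m :=
  if 0 ≤ r then ∑ k ∈ Finset.range (r.toNat + 1), hdotXF m k * (Yv m)⁻¹ ^ (r.toNat - k) else 0

/-- The super-symmetric function `s_{(ν;μ)}(x/y)` of a composite partition `(ν; μ)` with
`q = l(ν)`, `p = l(μ)`, given as the `(q+p) × (q+p)` block determinant (0-based indices). -/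
def sSup (m : ℕ) (ν μ : ℕ → ℕ) (q p : ℕ) : F m :=
  Matrix.det (Matrix.of fun r c : Fin (q + p) =>
    if (c : ℕ) < q then hdotSup m ((ν (q - 1 - (c : ℕ)) : ℤ) + (c : ℕ) - (r : ℕ))
    else hSup m ((μ ((c : ℕ) - q) : ℤ) + (r : ℕ) - (c : ℕ)))

/-- `s^{det}_{(ν;μ)}(x)`: the same block determinant built from `h_s(x)` and `ḣ_s(x)`. -/
def sDet (m : ℕ) (ν μ : ℕ → ℕ) (q p : ℕ) : F m :=
  Matrix.det (Matrix.of fun r c : Fin (q + p) =>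
    if (c : ℕ) < q then hdotXZ m ((ν (q - 1 - (c : ℕ)) : ℤ) + (c : ℕ) - (r : ℕ))
    else hXZ m ((μ ((c : ℕ) - q) : ℤ) + (r : ℕ) - (c : ℕ)))

/-- An integral dominant weight of size `m`: `λ_1 ≥ λ_2 ≥ ⋯ ≥ λ_m`. -/
def IsDom (m : ℕ) (lam : Fin m → ℤ) : Prop := ∀ i j : Fin m, i ≤ j → lam j ≤ lam i

/-- `f` is (the part function of) a partition with exactly `q` (positive) parts,
0-based indexing: the parts are `f 0 ≥ f 1 ≥ ⋯`. -/
def IsPartitionOfLen (f : ℕ → ℕ) (q : ℕ) : Prop :=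
  (∀ i j : ℕ, i ≤ j → f j ≤ f i) ∧ (∀ i : ℕ, 0 < f i ↔ i < q)

end

/-- The integral dominant weight `α ∪_m β̄ = (α_1, …, α_{l(α)}, 0, …, 0, -β_{l(β)}, …, -β_1)`
attached to an `m`-standard composite partition `(β; α)` (0-based indices): its `i`-th
entry is `α_i - β_{m-1-i}`. -/
def cupW (m : ℕ) (α β : ℕ → ℕ) : Fin m → ℤ := fun i =>
  (α (i : ℕ) : ℤ) - (β (m - 1 - (i : ℕ)) : ℤ)

/-- The integral dominant weight `λ = (μ_1, …, μ_{m-k}, 1-ν_k, …, 1-ν_1)` attached to an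
`m`-standard composite partition `(ν; μ)` with `l(ν) = k`, `l(μ) ≤ m - k`
(0-based indices, `μ_i := 0` for `i > l(μ)`). -/
def lamOfPair (m k : ℕ) (ν μ : ℕ → ℕ) : Fin m → ℤ := fun j =>
  if (j : ℕ) < m - k then (μ (j : ℕ) : ℤ) else 1 - (ν (m - 1 - (j : ℕ)) : ℤ)


noncomputable section
variable (m : ℕ)

lemma algF_inj : Function.Injective (algebraMap (MvPolynomial (Option (Fin m)) ℚ) (F m)) :=
  IsFractionRing.injective _ _

lemma Xv_inj : Function.Injective (Xv m) := by
  intro i j h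
  have h2 := algF_inj m h
  have := MvPolynomial.X_injective (R := ℚ) h2
  exact Option.some_injective _ this

lemma Xv_ne_zero (i : Fin m) : Xv m i ≠ 0 := by
  intro h
  have := algF_inj m (h.trans (map_zero _).symm)
  exact MvPolynomial.X_ne_zero _ this

lemma Yv_ne_zero : Yv m ≠ 0 := by
  intro h
  have := algF_inj m (h.trans (map_zero _).symm)
  exact MvPolynomial.X_ne_zero _ this

lemma aAlt_eq (α : Fin m → ℤ) :
    aAlt m α = ∑ w : Equiv.Perm (Fin m),
      ((Equiv.Perm.sign w : ℤ) : F m) * ∏ i, Xv m (w i) ^ α i := by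
  unfold aAlt; simp_rw [zsmul_eq_mul]

lemma aAlt_eq_zero_of_eq {α : Fin m → ℤ} {i j : Fin m} (hij : i ≠ j) (h : α i = α j) :
    aAlt m α = 0 := by
  have hswap : ∀ t : Fin m, α (Equiv.swap i j t) = α t := by
    intro t
    rcases eq_or_ne t i with rfl | hti
    · rw [Equiv.swap_apply_left]; exact h.symm
    rcases eq_or_ne t j with rfl | htj
    · rw [Equiv.swap_apply_right]; exact h
    · rw [Equiv.swap_apply_of_ne_of_ne hti htj]
  set f : Equiv.Perm (Fin m) → F m :=
    fun w => ((Equiv.Perm.sign w : ℤ) : F m) * ∏ t, Xv m (w t) ^ α t with hf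
  have step : ∀ w, f (Equiv.mulRight (Equiv.swap i j) w) = - f w := by
    intro w
    have hs : ((Equiv.Perm.sign (Equiv.mulRight (Equiv.swap i j) w) : ℤ) : F m)
        = - ((Equiv.Perm.sign w : ℤ) : F m) := by
      have : Equiv.Perm.sign (Equiv.mulRight (Equiv.swap i j) w)
          = - Equiv.Perm.sign w := by
        simp [Equiv.Perm.sign_mul, Equiv.Perm.sign_swap hij]
      rw [this]; push_cast; ring
    have hp : ∏ t, Xv m ((Equiv.mulRight (Equiv.swap i j) w) t) ^ α t
        = ∏ t, Xv m (w t) ^ α t := by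
      rw [← Equiv.prod_comp (Equiv.swap i j) (fun t => Xv m (w t) ^ α t)]
      refine Finset.prod_congr rfl fun t _ => ?_
      simp [hswap t]
    simp only [hf]
    rw [hs, hp]; ring
  have key : aAlt m α = - aAlt m α := by
    calc aAlt m α = ∑ w : Equiv.Perm (Fin m), f (Equiv.mulRight (Equiv.swap i j) w) := by
          rw [aAlt_eq]; exact (Equiv.sum_comp (Equiv.mulRight (Equiv.swap i j)) f).symm
    _ = ∑ w : Equiv.Perm (Fin m), - f w := Finset.sum_congr rfl (fun w _ => step w)
    _ = - aAlt m α := by rw [aAlt_eq, Finset.sum_neg_distrib]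
  have h2 : aAlt m α + aAlt m α = 0 := by linear_combination key
  rw [← two_mul] at h2
  exact (mul_eq_zero.mp h2).resolve_left two_ne_zero

lemma aAlt_delta_ne_zero : aAlt m (deltaW m) ≠ 0 := by
  have hvdm : (Matrix.vandermonde (Xv m)).det ≠ 0 := by
    rw [Matrix.det_vandermonde]
    refine Finset.prod_ne_zero_iff.2 fun i _ => Finset.prod_ne_zero_iff.2 fun j hj => ?_
    rw [Finset.mem_Ioi] at hj
    exact sub_ne_zero_of_ne fun hEq => hj.ne' (Xv_inj m hEq)
  have hdet : (Matrix.vandermonde (Xv m)).det = ∑ w : Equiv.Perm (Fin m),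
      ((Equiv.Perm.sign w : ℤ) : F m) * ∏ t, Xv m (w t) ^ (t : ℕ) := by
    rw [Matrix.det_apply]
    refine Finset.sum_congr rfl fun w _ => ?_
    rw [Units.smul_def, zsmul_eq_mul]
    congr 1
  have key : aAlt m (deltaW m)
      = ((Equiv.Perm.sign (Fin.revPerm (n := m)) : ℤ) : F m) * (Matrix.vandermonde (Xv m)).det := by
    rw [hdet, aAlt_eq, Finset.mul_sum]
    rw [← Equiv.sum_comp (Equiv.mulRight (Fin.revPerm (n := m)))
      (fun w => ((Equiv.Perm.sign w : ℤ) : F m) * ∏ t, Xv m (w t) ^ deltaW m t)]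
    refine Finset.sum_congr rfl fun w _ => ?_
    have h1 : ∏ t, Xv m ((Equiv.mulRight (Fin.revPerm (n := m)) w) t) ^ deltaW m t
        = ∏ t, Xv m (w t) ^ (t : ℕ) := by
      rw [← Equiv.prod_comp (Fin.revPerm (n := m))
        (fun t => Xv m (w t) ^ (t : ℕ))]
      refine Finset.prod_congr rfl fun t _ => ?_
      simp only [Equiv.coe_mulRight, Equiv.Perm.coe_mul, Function.comp_apply,
        Fin.revPerm_apply]
      have hd : deltaW m t = ((t.rev : ℕ) : ℤ) := by
        have := t.isLt
        simp only [deltaW, Fin.val_rev]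
        push_cast
        omega
      rw [hd, zpow_natCast]
    have hs : ((Equiv.Perm.sign (Equiv.mulRight (Fin.revPerm (n := m)) w) : ℤ) : F m)
        = ((Equiv.Perm.sign (Fin.revPerm (n := m)) : ℤ) : F m)
          * ((Equiv.Perm.sign w : ℤ) : F m) := by
      have : Equiv.Perm.sign (Equiv.mulRight (Fin.revPerm (n := m)) w)
          = Equiv.Perm.sign w * Equiv.Perm.sign (Fin.revPerm (n := m)) := by
        simp [Equiv.Perm.sign_mul]
      rw [this]; push_cast; ring
    rw [hs, h1]; ring
  rw [key]
  refine mul_ne_zero ?_ hvdm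
  rcases Int.units_eq_one_or (Equiv.Perm.sign (Fin.revPerm (n := m))) with h | h <;>
    simp [h]
end

noncomputable section
variable (m : ℕ)
lemma eX_top : eX m m = ∏ j, Xv m j := by
  have h : (Finset.powersetCard m (Finset.univ : Finset (Fin m))) = {Finset.univ} := by
    have h2 := Finset.powersetCard_self (Finset.univ : Finset (Fin m))
    simpa using h2
  unfold eX
  rw [h]
  simp

lemma eX_mul_aAlt (γ : Fin m → ℤ) :
    eX m m * aAlt m γ = aAlt m (fun i => γ i + 1) := by
  rw [eX_top, aAlt_eq, aAlt_eq, Finset.mul_sum]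
  refine Finset.sum_congr rfl fun w _ => ?_
  have h0 : ∏ j, Xv m j = ∏ i, Xv m (w i) := (Equiv.prod_comp w (Xv m)).symm
  rw [h0]
  rw [show (∏ i, Xv m (w i)) * (((Equiv.Perm.sign w : ℤ) : F m) * ∏ i, Xv m (w i) ^ γ i)
      = ((Equiv.Perm.sign w : ℤ) : F m) * ((∏ i, Xv m (w i)) * ∏ i, Xv m (w i) ^ γ i) by ring]
  congr 1
  rw [← Finset.prod_mul_distrib]
  refine Finset.prod_congr rfl fun i _ => ?_
  rw [zpow_add_one₀ (Xv_ne_zero m (w i))]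
  ring

lemma aAlt_mul_prod (γ : Fin m → ℤ) :
    aAlt m γ * ∏ j, (Xv m j + Yv m)
      = ∑ S : Finset (Fin m),
          aAlt m (fun i => γ i + if i ∈ S then 1 else 0) * Yv m ^ (m - S.card) := by
  have main : ∀ w : Equiv.Perm (Fin m),
      (∏ i, Xv m (w i) ^ γ i) * ∏ j, (Xv m j + Yv m)
        = ∑ S : Finset (Fin m),
            (∏ i, Xv m (w i) ^ (γ i + if i ∈ S then 1 else 0)) * Yv m ^ (m - S.card) := by
    intro w
    have h0 : ∏ j, (Xv m j + Yv m) = ∏ i, (Xv m (w i) + Yv m) :=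
      (Equiv.prod_comp w (fun j => Xv m j + Yv m)).symm
    rw [h0, ← Finset.prod_mul_distrib]
    have h1 : ∀ i : Fin m, Xv m (w i) ^ γ i * (Xv m (w i) + Yv m)
        = Xv m (w i) ^ (γ i + 1) + Xv m (w i) ^ γ i * Yv m := by
      intro i
      rw [zpow_add_one₀ (Xv_ne_zero m (w i))]
      ring
    rw [Finset.prod_congr rfl (fun i _ => h1 i), Finset.prod_add, Finset.powerset_univ]
    refine Finset.sum_congr rfl fun S _ => ?_
    have h2 : ∏ i ∈ Finset.univ \ S, (Xv m (w i) ^ γ i * Yv m)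
        = (∏ i ∈ Finset.univ \ S, Xv m (w i) ^ γ i) * Yv m ^ (m - S.card) := by
      rw [Finset.prod_mul_distrib, Finset.prod_const]
      congr 2
      rw [Finset.card_sdiff_of_subset (Finset.subset_univ S), Finset.card_univ, Fintype.card_fin]
    rw [h2, ← mul_assoc]
    congr 1
    rw [← Finset.prod_sdiff (Finset.subset_univ S)
      (f := fun i => Xv m (w i) ^ (γ i + if i ∈ S then 1 else 0)), mul_comm]
    congr 1
    · refine Finset.prod_congr rfl fun i hi => ?_
      rw [Finset.mem_sdiff] at hi
      simp [hi.2]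
    · refine Finset.prod_congr rfl fun i hi => by simp [hi]
  rw [aAlt_eq]
  calc (∑ w : Equiv.Perm (Fin m), ((Equiv.Perm.sign w : ℤ) : F m) * ∏ i, Xv m (w i) ^ γ i)
        * ∏ j, (Xv m j + Yv m)
      = ∑ w : Equiv.Perm (Fin m), ((Equiv.Perm.sign w : ℤ) : F m)
          * ((∏ i, Xv m (w i) ^ γ i) * ∏ j, (Xv m j + Yv m)) := by
        rw [Finset.sum_mul]; exact Finset.sum_congr rfl fun w _ => by ring
    _ = ∑ w : Equiv.Perm (Fin m), ∑ S : Finset (Fin m), ((Equiv.Perm.sign w : ℤ) : F m)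
          * ((∏ i, Xv m (w i) ^ (γ i + if i ∈ S then 1 else 0)) * Yv m ^ (m - S.card)) := by
        refine Finset.sum_congr rfl fun w _ => ?_
        rw [main w, Finset.mul_sum]
    _ = ∑ S : Finset (Fin m), ∑ w : Equiv.Perm (Fin m), ((Equiv.Perm.sign w : ℤ) : F m)
          * ((∏ i, Xv m (w i) ^ (γ i + if i ∈ S then 1 else 0)) * Yv m ^ (m - S.card)) :=
        Finset.sum_comm
    _ = ∑ S : Finset (Fin m),
          aAlt m (fun i => γ i + if i ∈ S then 1 else 0) * Yv m ^ (m - S.card) := by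
        refine Finset.sum_congr rfl fun S _ => ?_
        rw [aAlt_eq, Finset.sum_mul]
        exact Finset.sum_congr rfl fun w _ => by ring

lemma sum_eX_Yv : ∑ i ∈ Finset.range (m + 1), eX m i * Yv m ^ (m - i)
    = ∏ j, (Xv m j + Yv m) := by
  rw [Finset.prod_add, Finset.sum_powerset]
  rw [Finset.card_univ, Fintype.card_fin]
  refine Finset.sum_congr rfl fun i hi => ?_
  unfold eX
  rw [Finset.sum_mul]
  refine Finset.sum_congr rfl fun t ht => ?_
  rw [Finset.mem_powersetCard] at ht
  rw [Finset.prod_const]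
  congr 2
  rw [Finset.card_sdiff_of_subset ht.1, Finset.card_univ, Fintype.card_fin, ht.2]
end

lemma isDom_of_adj {m : ℕ} {f : Fin m → ℤ}
    (h : ∀ a : ℕ, ∀ h1 : a + 1 < m, f ⟨a + 1, h1⟩ ≤ f ⟨a, by omega⟩) : IsDom m f := by
  have H : ∀ d a, ∀ h2 : a + d < m, f ⟨a + d, h2⟩ ≤ f ⟨a, by omega⟩ := by
    intro d
    induction d with
    | zero => intro a h2; simp
    | succ d ih =>
      intro a h2
      have h3 : a + d < m := by omega
      calc f ⟨a + (d+1), h2⟩ = f ⟨(a + d) + 1, by omega⟩ := rfl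
        _ ≤ f ⟨a + d, h3⟩ := h (a + d) (by omega)
        _ ≤ f ⟨a, by omega⟩ := ih a h3
  intro i j hij
  have hij' : (i : ℕ) ≤ (j : ℕ) := hij
  have h2 : (i : ℕ) + ((j : ℕ) - (i : ℕ)) < m := by omega
  have key := H ((j : ℕ) - (i : ℕ)) (i : ℕ) h2
  have e1 : (⟨(i : ℕ) + ((j : ℕ) - (i : ℕ)), h2⟩ : Fin m) = j := Fin.ext (by simp; omega)
  have e2 : (⟨(i : ℕ), by omega⟩ : Fin m) = i := Fin.ext rfl
  rwa [e1, e2] at key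

lemma exists_adj_of_not_isDom {m : ℕ} {f : Fin m → ℤ} (h : ¬ IsDom m f) :
    ∃ a : ℕ, ∃ h1 : a + 1 < m, f ⟨a, by omega⟩ < f ⟨a + 1, h1⟩ := by
  by_contra hc
  push_neg at hc
  exact h (isDom_of_adj fun a h1 => hc a h1)

lemma exists_partition_len {f : ℕ → ℕ} (mono : ∀ i j : ℕ, i ≤ j → f j ≤ f i)
    {N : ℕ} (hN : f N = 0) : ∃ q, IsPartitionOfLen f q := by
  have hex : ∃ n, f n = 0 := ⟨N, hN⟩
  refine ⟨Nat.find hex, mono, fun i => ?_⟩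
  constructor
  · intro hfi
    by_contra hi
    push_neg at hi
    have := mono (Nat.find hex) i hi
    rw [Nat.find_spec hex] at this
    omega
  · intro hi
    have := Nat.find_min hex hi
    omega

noncomputable section
/-- α-component of the inverse map: subset `S` ↦ partition pair. -/
def gAF (m k : ℕ) (μ : ℕ → ℕ) (S : Finset (Fin m)) : ℕ → ℕ := fun i =>
  if h : i < m - k then (if (⟨i, by omega⟩ : Fin m) ∈ S then μ i else μ i - 1) else 0

def gBF (m k : ℕ) (ν : ℕ → ℕ) (S : Finset (Fin m)) : ℕ → ℕ := fun j =>
  if h : j < k ∧ k ≤ m then (if (⟨m - 1 - j, by omega⟩ : Fin m) ∈ S then ν j - 1 else ν j) else 0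

section Main
variable {m k : ℕ} {ν μ : ℕ → ℕ}

lemma gA_zero (S : Finset (Fin m)) {i : ℕ} (h : ¬ i < m - k) : gAF m k μ S i = 0 := by
  unfold gAF; rw [dif_neg h]

lemma gB_zero (S : Finset (Fin m)) {j : ℕ} (h : ¬ j < k) : gBF m k ν S j = 0 := by
  unfold gBF; rw [dif_neg (by tauto)]

lemma gA_cast (hμ : IsPartitionOfLen μ (m - k)) (S : Finset (Fin m)) (i : Fin m)
    (h : (i : ℕ) < m - k) :
    (gAF m k μ S (i : ℕ) : ℤ) + 1
      = lamOfPair m k ν μ i + (if i ∈ S then 1 else 0) := by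
  have hpos : 0 < μ (i : ℕ) := (hμ.2 _).2 h
  unfold gAF lamOfPair
  rw [dif_pos h, if_pos h]
  simp only [Fin.eta]
  split_ifs with hs <;> omega

lemma gB_cast (hm : 1 ≤ m) (hk : k ≤ m) (hν : IsPartitionOfLen ν k) (S : Finset (Fin m))
    (i : Fin m) (h : m - k ≤ (i : ℕ)) :
    (gBF m k ν S (m - 1 - (i : ℕ)) : ℤ)
      = 1 - (lamOfPair m k ν μ i + (if i ∈ S then 1 else 0)) := by
  have him := i.isLt
  have hj : m - 1 - (i : ℕ) < k := by omega
  have hpos : 0 < ν (m - 1 - (i : ℕ)) := (hν.2 _).2 hj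
  have hjj : m - 1 - (m - 1 - (i : ℕ)) = (i : ℕ) := by omega
  unfold gBF lamOfPair
  rw [dif_pos ⟨hj, hk⟩]
  simp only [hjj, Fin.eta]
  rw [if_neg (show ¬ (i : ℕ) < m - k by omega)]
  split_ifs with hs <;> omega

lemma dom_of_mono (hm : 1 ≤ m) (hk : k ≤ m) (hν : IsPartitionOfLen ν k)
    (hμ : IsPartitionOfLen μ (m - k)) (S : Finset (Fin m))
    (hA : ∀ i j : ℕ, i ≤ j → gAF m k μ S j ≤ gAF m k μ S i)
    (hB : ∀ i j : ℕ, i ≤ j → gBF m k ν S j ≤ gBF m k ν S i) :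
    IsDom m (fun i => lamOfPair m k ν μ i + if i ∈ S then 1 else 0) := by
  apply isDom_of_adj
  intro a h1
  set i0 : Fin m := ⟨a, by omega⟩ with hi0
  set i1 : Fin m := ⟨a + 1, h1⟩ with hi1
  rcases lt_or_ge (a + 1) (m - k) with hc | hc
  · have e0 := gA_cast (ν := ν) hμ S i0 (by simpa [hi0] using by omega)
    have e1 := gA_cast (ν := ν) hμ S i1 (by simpa [hi1] using hc)
    have hm1 := hA a (a + 1) (by omega)
    simp only [hi0, hi1] at e0 e1 ⊢
    omega
  · rcases lt_or_ge a (m - k) with hc2 | hc2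
    · have e0 := gA_cast (ν := ν) hμ S i0 (by simpa [hi0] using hc2)
      have e1 := gB_cast (μ := μ) hm hk hν S i1 (by simpa [hi1] using hc)
      simp only [hi0, hi1] at e0 e1 ⊢
      omega
    · have e0 := gB_cast (μ := μ) hm hk hν S i0 (by simpa [hi0] using hc2)
      have e1 := gB_cast (μ := μ) hm hk hν S i1 (by simpa [hi1] using hc)
      have hm1 := hB (m - 1 - (a + 1)) (m - 1 - a) (by omega)
      simp only [hi0, hi1] at e0 e1 ⊢
      omega

lemma mono_gA_of_dom (hm : 1 ≤ m) (hk : k ≤ m) (hμ : IsPartitionOfLen μ (m - k))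
    (S : Finset (Fin m))
    (hS : IsDom m (fun i => lamOfPair m k ν μ i + if i ∈ S then 1 else 0)) :
    ∀ i j : ℕ, i ≤ j → gAF m k μ S j ≤ gAF m k μ S i := by
  intro i j hij
  rcases lt_or_ge j (m - k) with hj | hj
  · have hi : i < m - k := by omega
    have him : i < m := by omega
    have hjm : j < m := by omega
    have e0 := gA_cast (ν := ν) hμ S ⟨i, him⟩ hi
    have e1 := gA_cast (ν := ν) hμ S ⟨j, hjm⟩ hj
    have := hS ⟨i, him⟩ ⟨j, hjm⟩ (by simpa [Fin.le_def] using hij)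
    simp only at e0 e1 this
    omega
  · rw [gA_zero S (by omega)]
    omega

lemma mono_gB_of_dom (hm : 1 ≤ m) (hk : k ≤ m) (hν : IsPartitionOfLen ν k)
    (S : Finset (Fin m))
    (hS : IsDom m (fun i => lamOfPair m k ν μ i + if i ∈ S then 1 else 0)) :
    ∀ i j : ℕ, i ≤ j → gBF m k ν S j ≤ gBF m k ν S i := by
  intro i j hij
  rcases lt_or_ge j k with hj | hj
  · have hi : i < k := by omega
    -- indices in Fin m: a = m-1-i ≥ b = m-1-j
    have hbm : m - 1 - i < m := by omega
    have ham : m - 1 - j < m := by omega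
    have e0 := gB_cast (μ := μ) hm hk hν S ⟨m - 1 - i, hbm⟩ (by simp; omega)
    have e1 := gB_cast (μ := μ) hm hk hν S ⟨m - 1 - j, ham⟩ (by simp; omega)
    have hfold0 : m - 1 - (m - 1 - i) = i := by omega
    have hfold1 : m - 1 - (m - 1 - j) = j := by omega
    simp only [hfold0, hfold1] at e0 e1
    have := hS ⟨m - 1 - j, ham⟩ ⟨m - 1 - i, hbm⟩ (by simp [Fin.le_def]; omega)
    simp only at this
    omega
  · rw [gB_zero S (by omega)]
    omega

end Main
end


def cSF (m : ℕ) (S : Finset (Fin m)) : ℕ → ℤ := fun n =>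
  if h : n < m then (if (⟨n, h⟩ : Fin m) ∈ S then 1 else 0) else 0

lemma mk_mem_congr {m : ℕ} {S : Finset (Fin m)} {n : ℕ} (p q : n < m) :
    ((⟨n, p⟩ : Fin m) ∈ S) = ((⟨n, q⟩ : Fin m) ∈ S) := rfl

def SOfF (m k : ℕ) (ν μ : ℕ → ℕ) (αβ : (ℕ → ℕ) × (ℕ → ℕ)) : Finset (Fin m) :=
  Finset.univ.filter (fun i => if (i : ℕ) < m - k then αβ.1 (i : ℕ) = μ (i : ℕ)
    else ν (m - 1 - (i : ℕ)) = αβ.2 (m - 1 - (i : ℕ)) + 1)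

section Main2
variable {m k : ℕ} {ν μ : ℕ → ℕ}

lemma dom_lam (hν : IsPartitionOfLen ν k)
    (hμ : IsPartitionOfLen μ (m - k)) : IsDom m (lamOfPair m k ν μ) := by
  apply isDom_of_adj
  intro a h1
  have h2 : μ (a + 1) ≤ μ a := hμ.1 a (a + 1) (by omega)
  have h3 : ν (m - 1 - a) ≤ ν (m - 1 - (a + 1)) := hν.1 (m - 1 - (a + 1)) (m - 1 - a) (by omega)
  unfold lamOfPair
  show (if a + 1 < m - k then (μ (a + 1) : ℤ) else 1 - (ν (m - 1 - (a + 1)) : ℤ))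
      ≤ (if a < m - k then (μ a : ℤ) else 1 - (ν (m - 1 - a) : ℤ))
  split_ifs with hA hB
  · exact_mod_cast h2
  · omega
  · have h4 := (hμ.2 a).2 (by assumption)
    omega
  · omega

lemma vanish (hm : 1 ≤ m) (hk : k ≤ m) (hν : IsPartitionOfLen ν k)
    (hμ : IsPartitionOfLen μ (m - k)) (S : Finset (Fin m))
    (hS : ¬ IsDom m (fun i => lamOfPair m k ν μ i + if i ∈ S then 1 else 0)) :
    aAlt m (fun i => (lamOfPair m k ν μ i + deltaW m i) + if i ∈ S then 1 else 0) = 0 := by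
  obtain ⟨a, h1, hlt⟩ := exists_adj_of_not_isDom hS
  have h0 : a < m := by omega
  refine aAlt_eq_zero_of_eq m (i := ⟨a, h0⟩) (j := ⟨a + 1, h1⟩)
    (Fin.ne_of_val_ne (show a ≠ a + 1 by omega)) ?_
  have hdom := dom_lam hν hμ ⟨a, h0⟩ ⟨a + 1, h1⟩ (Fin.mk_le_mk.mpr (by omega))
  have hlt' : lamOfPair m k ν μ ⟨a, h0⟩ + (if (⟨a, h0⟩ : Fin m) ∈ S then (1:ℤ) else 0)
      < lamOfPair m k ν μ ⟨a + 1, h1⟩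
        + (if (⟨a + 1, h1⟩ : Fin m) ∈ S then (1:ℤ) else 0) := hlt
  have hδ : deltaW m (⟨a, h0⟩ : Fin m) = deltaW m (⟨a + 1, h1⟩ : Fin m) + 1 := by
    show (m : ℤ) - 1 - (a : ℕ) = (m : ℤ) - 1 - ((a + 1 : ℕ) : ℤ) + 1
    push_cast
    ring
  show lamOfPair m k ν μ ⟨a, h0⟩ + deltaW m ⟨a, h0⟩
        + (if (⟨a, h0⟩ : Fin m) ∈ S then (1:ℤ) else 0)
      = lamOfPair m k ν μ ⟨a + 1, h1⟩ + deltaW m ⟨a + 1, h1⟩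
        + (if (⟨a + 1, h1⟩ : Fin m) ∈ S then (1:ℤ) else 0)
  set x0 : ℤ := if (⟨a, h0⟩ : Fin m) ∈ S then (1:ℤ) else 0 with hx0
  set x1 : ℤ := if (⟨a + 1, h1⟩ : Fin m) ∈ S then (1:ℤ) else 0 with hx1
  have b0 : 0 ≤ x0 ∧ x0 ≤ 1 := by rw [hx0]; split_ifs <;> omega
  have b1 : 0 ≤ x1 ∧ x1 ≤ 1 := by rw [hx1]; split_ifs <;> omega
  omega

lemma gA_step (hμ : IsPartitionOfLen μ (m - k)) (S : Finset (Fin m)) :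
    ∀ i, gAF m k μ S i = μ i ∨ gAF m k μ S i + 1 = μ i := by
  intro i
  unfold gAF
  split_ifs with h h2
  · left; rfl
  · right
    have := (hμ.2 i).2 h
    omega
  · left
    have h0 : ¬ 0 < μ i := fun hp => h ((hμ.2 i).1 hp)
    omega

lemma gB_step (hk : k ≤ m) (hν : IsPartitionOfLen ν k) (S : Finset (Fin m)) :
    ∀ j, gBF m k ν S j = ν j ∨ gBF m k ν S j + 1 = ν j := by
  intro j
  unfold gBF
  split_ifs with h h2
  · right
    have := (hν.2 j).2 h.1
    omega
  · left; rfl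
  · left
    have h0 : ¬ 0 < ν j := fun hp => h ⟨(hν.2 j).1 hp, hk⟩
    omega

lemma gA_SOf (hμ : IsPartitionOfLen μ (m - k)) (αβ : (ℕ → ℕ) × (ℕ → ℕ))
    (hstep : ∀ i, αβ.1 i = μ i ∨ αβ.1 i + 1 = μ i) :
    gAF m k μ (SOfF m k ν μ αβ) = αβ.1 := by
  funext i
  rcases lt_or_ge i (m - k) with h | h
  · have him : i < m := by omega
    have hmem : ((⟨i, him⟩ : Fin m) ∈ SOfF m k ν μ αβ) ↔ αβ.1 i = μ i := by
      unfold SOfF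
      rw [Finset.mem_filter]
      simp only [Finset.mem_univ, true_and]
      rw [if_pos (show ((⟨i, him⟩ : Fin m) : ℕ) < m - k from h)]
    unfold gAF
    rw [dif_pos h]
    rcases hstep i with he | he
    · rw [if_pos (hmem.2 he), he]
    · have hne : ¬ αβ.1 i = μ i := by omega
      rw [if_neg (fun hmm => hne (hmem.1 hmm))]
      omega
  · rw [gA_zero _ (by omega)]
    have h0 : ¬ 0 < μ i := fun hp => by have := (hμ.2 i).1 hp; omega
    rcases hstep i with he | he <;> omega

lemma gB_SOf (hm : 1 ≤ m) (hk : k ≤ m) (hν : IsPartitionOfLen ν k)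
    (αβ : (ℕ → ℕ) × (ℕ → ℕ))
    (hstep : ∀ i, αβ.2 i = ν i ∨ αβ.2 i + 1 = ν i) :
    gBF m k ν (SOfF m k ν μ αβ) = αβ.2 := by
  funext j
  rcases lt_or_ge j k with h | h
  · have hjm : m - 1 - j < m := by omega
    have hfold : m - 1 - (m - 1 - j) = j := by omega
    have hmem : ((⟨m - 1 - j, hjm⟩ : Fin m) ∈ SOfF m k ν μ αβ) ↔ ν j = αβ.2 j + 1 := by
      unfold SOfF
      rw [Finset.mem_filter]
      simp only [Finset.mem_univ, true_and]
      rw [if_neg (show ¬ ((⟨m - 1 - j, hjm⟩ : Fin m) : ℕ) < m - k from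
        (by omega : ¬ m - 1 - j < m - k))]
      rw [show m - 1 - ((⟨m - 1 - j, hjm⟩ : Fin m) : ℕ) = j from hfold]
    unfold gBF
    rw [dif_pos ⟨h, hk⟩]
    rcases hstep j with he | he
    · rw [if_neg (fun hmm => by have := hmem.1 hmm; omega)]
      exact he.symm
    · rw [if_pos (hmem.2 (by omega))]
      omega
  · rw [gB_zero _ (by omega)]
    have h0 : ¬ 0 < ν j := fun hp => by have := (hν.2 j).1 hp; omega
    rcases hstep j with he | he <;> omega

end Main2

section Main3
variable {m k : ℕ} {ν μ : ℕ → ℕ}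

lemma gA_term (hk : k ≤ m) (hμ : IsPartitionOfLen μ (m - k)) (S : Finset (Fin m))
    {i : ℕ} (h : i < m - k) :
    (μ i : ℤ) - gAF m k μ S i = 1 - cSF m S i := by
  have him : i < m := by omega
  have hpos := (hμ.2 i).2 h
  unfold gAF cSF
  rw [dif_pos h, dif_pos him]
  by_cases hs : (⟨i, him⟩ : Fin m) ∈ S
  · rw [if_pos hs, if_pos hs]; omega
  · rw [if_neg hs, if_neg hs]; omega

lemma gB_term (hm : 1 ≤ m) (hk : k ≤ m) (hν : IsPartitionOfLen ν k) (S : Finset (Fin m))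
    {j : ℕ} (h : j < k) :
    (ν j : ℤ) - gBF m k ν S j = cSF m S (m - 1 - j) := by
  have hjm : m - 1 - j < m := by omega
  have hpos := (hν.2 j).2 h
  unfold gBF cSF
  rw [dif_pos ⟨h, hk⟩, dif_pos hjm]
  by_cases hs : (⟨m - 1 - j, hjm⟩ : Fin m) ∈ S
  · rw [if_pos hs, if_pos hs]; omega
  · rw [if_neg hs, if_neg hs]; omega

lemma card_cSF (S : Finset (Fin m)) : (S.card : ℤ) = ∑ i ∈ Finset.range m, cSF m S i := by
  rw [← Fin.sum_univ_eq_sum_range (cSF m S) m]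
  have h1 : ∀ i : Fin m, cSF m S (i : ℕ) = if i ∈ S then (1 : ℤ) else 0 := by
    intro i
    unfold cSF
    rw [dif_pos i.isLt]
  rw [Finset.sum_congr rfl (fun i _ => h1 i), Finset.sum_ite_mem, Finset.univ_inter,
    Finset.sum_const]
  simp

lemma sum_reindex (hm : 1 ≤ m) (hk : k ≤ m) (S : Finset (Fin m)) :
    ∑ j ∈ Finset.range k, cSF m S (m - 1 - j) = ∑ i ∈ Finset.Ico (m - k) m, cSF m S i := by
  refine Finset.sum_nbij' (i := fun j => m - 1 - j) (j := fun i => m - 1 - i)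
    ?_ ?_ ?_ ?_ ?_
  · intro a ha
    simp only [Finset.mem_range] at ha
    simp only [Finset.mem_Ico]
    omega
  · intro a ha
    simp only [Finset.mem_Ico] at ha
    simp only [Finset.mem_range]
    omega
  · intro a ha
    simp only [Finset.mem_range] at ha
    show m - 1 - (m - 1 - a) = a
    omega
  · intro a ha
    simp only [Finset.mem_Ico] at ha
    show m - 1 - (m - 1 - a) = a
    omega
  · intro a ha
    rfl

lemma countA (hk : k ≤ m) (hμ : IsPartitionOfLen μ (m - k)) (S : Finset (Fin m)) :
    ∑ᶠ i : ℕ, ((μ i : ℤ) - gAF m k μ S i)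
      = ((m - k : ℕ) : ℤ) - ∑ i ∈ Finset.range (m - k), cSF m S i := by
  have h1 : ∑ᶠ i : ℕ, ((μ i : ℤ) - gAF m k μ S i)
      = ∑ i ∈ Finset.range (m - k), ((μ i : ℤ) - gAF m k μ S i) := by
    apply finsum_eq_sum_of_support_subset
    intro i hi
    rw [Function.mem_support] at hi
    rw [Finset.coe_range, Set.mem_Iio]
    by_contra hcon
    push_neg at hcon
    rw [gA_zero S (by omega)] at hi
    have h0 : ¬ 0 < μ i := fun hp => by have := (hμ.2 i).1 hp; omega
    have : μ i = 0 := by omega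
    simp [this] at hi
  rw [h1, Finset.sum_congr rfl (fun i hi => gA_term hk hμ S (Finset.mem_range.mp hi)),
    Finset.sum_sub_distrib, Finset.sum_const, Finset.card_range]
  simp

lemma countB (hm : 1 ≤ m) (hk : k ≤ m) (hν : IsPartitionOfLen ν k) (S : Finset (Fin m)) :
    ∑ᶠ j : ℕ, ((ν j : ℤ) - gBF m k ν S j)
      = ∑ i ∈ Finset.Ico (m - k) m, cSF m S i := by
  have h1 : ∑ᶠ j : ℕ, ((ν j : ℤ) - gBF m k ν S j)
      = ∑ j ∈ Finset.range k, ((ν j : ℤ) - gBF m k ν S j) := by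
    apply finsum_eq_sum_of_support_subset
    intro j hj
    rw [Function.mem_support] at hj
    rw [Finset.coe_range, Set.mem_Iio]
    by_contra hcon
    push_neg at hcon
    rw [gB_zero S (by omega)] at hj
    have h0 : ¬ 0 < ν j := fun hp => by have := (hν.2 j).1 hp; omega
    have : ν j = 0 := by omega
    simp [this] at hj
  rw [h1, Finset.sum_congr rfl (fun j hj => gB_term hm hk hν S (Finset.mem_range.mp hj))]
  exact sum_reindex hm hk S

lemma count_total (hm : 1 ≤ m) (hk : k ≤ m) (hν : IsPartitionOfLen ν k)
    (hμ : IsPartitionOfLen μ (m - k)) (S : Finset (Fin m)) :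
    (∑ᶠ i : ℕ, ((μ i : ℤ) - gAF m k μ S i)) - (∑ᶠ i : ℕ, ((ν i : ℤ) - gBF m k ν S i))
      = (m : ℤ) - k - S.card := by
  rw [countA hk hμ S, countB hm hk hν S]
  have hsplit : (∑ i ∈ Finset.range (m - k), cSF m S i)
      + ∑ i ∈ Finset.Ico (m - k) m, cSF m S i = ∑ i ∈ Finset.range m, cSF m S i := by
    simp only [Finset.range_eq_Ico]
    exact Finset.sum_Ico_consecutive _ (by omega) (by omega)
  have hcard := card_cSF (m := m) S
  omega

lemma g_inj (hm : 1 ≤ m) (hk : k ≤ m) (hν : IsPartitionOfLen ν k)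
    (hμ : IsPartitionOfLen μ (m - k)) {S S' : Finset (Fin m)}
    (hA : gAF m k μ S = gAF m k μ S') (hB : gBF m k ν S = gBF m k ν S') : S = S' := by
  ext i
  rcases lt_or_ge (i : ℕ) (m - k) with h | h
  · have e0 := gA_cast (ν := ν) hμ S i h
    have e0' := gA_cast (ν := ν) hμ S' i h
    have ec : (gAF m k μ S (i : ℕ) : ℤ) = gAF m k μ S' (i : ℕ) := by rw [hA]
    constructor
    · intro hs
      by_contra hs'
      rw [if_pos hs] at e0
      rw [if_neg hs'] at e0'
      omega
    · intro hs
      by_contra hs'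
      rw [if_neg hs'] at e0
      rw [if_pos hs] at e0'
      omega
  · have e0 := gB_cast (μ := μ) hm hk hν S i h
    have e0' := gB_cast (μ := μ) hm hk hν S' i h
    have ec : (gBF m k ν S (m - 1 - (i : ℕ)) : ℤ)
        = gBF m k ν S' (m - 1 - (i : ℕ)) := by rw [hB]
    constructor
    · intro hs
      by_contra hs'
      rw [if_pos hs] at e0
      rw [if_neg hs'] at e0'
      omega
    · intro hs
      by_contra hs'
      rw [if_neg hs'] at e0
      rw [if_pos hs] at e0'
      omega

end Main3

noncomputable section

section Main4
variable {m k : ℕ} {ν μ : ℕ → ℕ}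

lemma cup_eq (hm : 1 ≤ m) (hk : k ≤ m) (hν : IsPartitionOfLen ν k)
    (hμ : IsPartitionOfLen μ (m - k)) (S : Finset (Fin m)) (i : Fin m) :
    cupW m (gAF m k μ S) (gBF m k ν S) i + 1
      = lamOfPair m k ν μ i + (if i ∈ S then 1 else 0) := by
  have him := i.isLt
  unfold cupW
  rcases lt_or_ge (i : ℕ) (m - k) with h | h
  · rw [gB_zero _ (show ¬ m - 1 - (i : ℕ) < k by omega)]
    have := gA_cast (ν := ν) hμ S i h
    omega
  · rw [gA_zero _ (by omega)]
    have := gB_cast (μ := μ) hm hk hν S i h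
    omega
end Main4

/-- Equation (19) of the paper, the typical case identity. For an
`m`-standard composite partition `(ν; μ)` with `l(ν) = k`, `l(μ) = m - k`, and
`λ = (μ_1, …, μ_{m-k}, 1-ν_k, …, 1-ν_1)`:
`s_λ(x) ∑_{i=0}^m e_i(x) y^{m-i-k} = ∑_{(α,β)} e_m(x) s_{α ∪_m β̄}(x) y^{a-b}`,
the sum over pairs of partitions `(α, β)` with `μ_i - α_i ∈ {0,1}`, `ν_i - β_i ∈ {0,1}`,
where `a = |μ| - |α|`, `b = |ν| - |β|`. -/
theorem typical_case_identity (m k : ℕ) (hm : 1 ≤ m) (hk : k ≤ m) (ν μ : ℕ → ℕ)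
    (hν : IsPartitionOfLen ν k) (hμ : IsPartitionOfLen μ (m - k)) :
    schurW m (lamOfPair m k ν μ) *
      (∑ i ∈ Finset.range (m + 1), eX m i * Yv m ^ ((m : ℤ) - i - k)) =
    ∑ᶠ αβ : (ℕ → ℕ) × (ℕ → ℕ),
      if (∃ la, IsPartitionOfLen αβ.1 la) ∧ (∃ lb, IsPartitionOfLen αβ.2 lb) ∧
          (∀ i, αβ.1 i = μ i ∨ αβ.1 i + 1 = μ i) ∧ (∀ i, αβ.2 i = ν i ∨ αβ.2 i + 1 = ν i)
      then eX m m * schurW m (cupW m αβ.1 αβ.2) *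
        Yv m ^ ((∑ᶠ i : ℕ, ((μ i : ℤ) - αβ.1 i)) - ∑ᶠ i : ℕ, ((ν i : ℤ) - αβ.2 i))
      else 0 := by

  classical
  have hY := Yv_ne_zero m
  have hD := aAlt_delta_ne_zero m
  -- notation
  set DS : Finset (Finset (Fin m)) := Finset.univ.filter
    (fun S => IsDom m (fun i => lamOfPair m k ν μ i + if i ∈ S then 1 else 0)) with hDS
  set g : Finset (Fin m) → (ℕ → ℕ) × (ℕ → ℕ) :=
    fun S => (gAF m k μ S, gBF m k ν S) with hg
  set f : (ℕ → ℕ) × (ℕ → ℕ) → F m := fun αβ =>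
    if (∃ la, IsPartitionOfLen αβ.1 la) ∧ (∃ lb, IsPartitionOfLen αβ.2 lb) ∧
        (∀ i, αβ.1 i = μ i ∨ αβ.1 i + 1 = μ i) ∧ (∀ i, αβ.2 i = ν i ∨ αβ.2 i + 1 = ν i)
    then eX m m * schurW m (cupW m αβ.1 αβ.2) *
      Yv m ^ ((∑ᶠ i : ℕ, ((μ i : ℤ) - αβ.1 i)) - ∑ᶠ i : ℕ, ((ν i : ℤ) - αβ.2 i))
    else 0 with hf
  -- Step 1 : restructure the y-powers
  have hstep1 : (∑ i ∈ Finset.range (m + 1), eX m i * Yv m ^ ((m : ℤ) - i - k))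
      = (∑ i ∈ Finset.range (m + 1), eX m i * Yv m ^ (m - i)) * Yv m ^ (-(k : ℤ)) := by
    rw [Finset.sum_mul]
    refine Finset.sum_congr rfl fun i hi => ?_
    rw [Finset.mem_range] at hi
    rw [mul_assoc]
    congr 1
    rw [← zpow_natCast (Yv m) (m - i), ← zpow_add₀ hY]
    congr 1
    omega
  rw [hstep1, sum_eX_Yv]
  -- Step 2 : expand the product inside the alternating sum
  have hLHS : schurW m (lamOfPair m k ν μ) * ((∏ j, (Xv m j + Yv m)) * Yv m ^ (-(k : ℤ)))
      = ∑ S : Finset (Fin m),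
          aAlt m (fun i => (lamOfPair m k ν μ i + deltaW m i) + if i ∈ S then 1 else 0)
            * Yv m ^ (m - S.card) * Yv m ^ (-(k : ℤ)) * (aAlt m (deltaW m))⁻¹ := by
    have e1 : schurW m (lamOfPair m k ν μ) * ((∏ j, (Xv m j + Yv m)) * Yv m ^ (-(k : ℤ)))
        = (aAlt m (fun i => lamOfPair m k ν μ i + deltaW m i) * ∏ j, (Xv m j + Yv m))
          * Yv m ^ (-(k : ℤ)) * (aAlt m (deltaW m))⁻¹ := by
      rw [schurW, div_eq_mul_inv]
      ring
    rw [e1, aAlt_mul_prod m (fun i => lamOfPair m k ν μ i + deltaW m i),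
      Finset.sum_mul, Finset.sum_mul]
  rw [hLHS]
  -- Step 3 : kill the non-dominant subsets
  have hsplit : ∑ S : Finset (Fin m),
        aAlt m (fun i => (lamOfPair m k ν μ i + deltaW m i) + if i ∈ S then 1 else 0)
          * Yv m ^ (m - S.card) * Yv m ^ (-(k : ℤ)) * (aAlt m (deltaW m))⁻¹
      = ∑ S ∈ DS,
          aAlt m (fun i => (lamOfPair m k ν μ i + deltaW m i) + if i ∈ S then 1 else 0)
            * Yv m ^ (m - S.card) * Yv m ^ (-(k : ℤ)) * (aAlt m (deltaW m))⁻¹ := by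
    rw [hDS]
    symm
    apply Finset.sum_filter_of_ne
    intro S _ hne
    by_contra hdom
    rw [vanish hm hk hν hμ S hdom] at hne
    simp at hne
  rw [hsplit]
  -- Step 4 : right-hand side as a sum over DS
  have hcond : ∀ S ∈ DS,
      (∃ la, IsPartitionOfLen (gAF m k μ S) la)
        ∧ (∃ lb, IsPartitionOfLen (gBF m k ν S) lb)
        ∧ (∀ i, gAF m k μ S i = μ i ∨ gAF m k μ S i + 1 = μ i)
        ∧ (∀ i, gBF m k ν S i = ν i ∨ gBF m k ν S i + 1 = ν i) := by
    intro S hS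
    rw [hDS, Finset.mem_filter] at hS
    have hdom := hS.2
    exact ⟨exists_partition_len (mono_gA_of_dom hm hk hμ S hdom) (gA_zero S (lt_irrefl _)),
      exists_partition_len (mono_gB_of_dom hm hk hν S hdom) (gB_zero S (lt_irrefl _)),
      gA_step hμ S, gB_step hk hν S⟩
  have hsupp : Function.support f ⊆ ↑(DS.image g) := by
    intro αβ hαβ
    rw [Function.mem_support] at hαβ
    simp only [hf] at hαβ
    by_cases hc : (∃ la, IsPartitionOfLen αβ.1 la) ∧ (∃ lb, IsPartitionOfLen αβ.2 lb) ∧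
        (∀ i, αβ.1 i = μ i ∨ αβ.1 i + 1 = μ i) ∧ (∀ i, αβ.2 i = ν i ∨ αβ.2 i + 1 = ν i)
    · obtain ⟨⟨la, hla⟩, ⟨lb, hlb⟩, hsa, hsb⟩ := hc
      have hA := gA_SOf (ν := ν) hμ αβ hsa
      have hB := gB_SOf (μ := μ) hm hk hν αβ hsb
      have hmemDS : SOfF m k ν μ αβ ∈ DS := by
        rw [hDS, Finset.mem_filter]
        refine ⟨Finset.mem_univ _, dom_of_mono hm hk hν hμ _ ?_ ?_⟩
        · rw [hA]; exact hla.1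
        · rw [hB]; exact hlb.1
      rw [Finset.mem_coe, Finset.mem_image]
      exact ⟨SOfF m k ν μ αβ, hmemDS, Prod.ext hA hB⟩
    · rw [if_neg hc] at hαβ
      exact absurd rfl hαβ
  rw [finsum_eq_sum_of_support_subset f hsupp]
  have hinj : ∀ x ∈ DS, ∀ y ∈ DS, g x = g y → x = y := by
    intro S hS S' hS' hEq
    simp only [hg] at hEq
    exact g_inj hm hk hν hμ (congrArg Prod.fst hEq) (congrArg Prod.snd hEq)
  rw [Finset.sum_image hinj]
  -- Step 5 : termwise comparison
  refine Finset.sum_congr rfl fun S hS => ?_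
  simp only [hf, hg]
  rw [if_pos (hcond S hS)]
  -- rewrite the exponent
  rw [count_total hm hk hν hμ S]
  -- rewrite aAlt (lam+δ+χ) as eX * aAlt (cup+δ)
  have hfun : (fun i => (lamOfPair m k ν μ i + deltaW m i) + if i ∈ S then 1 else 0)
      = (fun i => (cupW m (gAF m k μ S) (gBF m k ν S) i + deltaW m i) + 1) := by
    funext i
    have := cup_eq hm hk hν hμ S i
    omega
  rw [hfun, ← eX_mul_aAlt]
  rw [schurW, div_eq_mul_inv]
  have hYpow : (Yv m ^ (m - S.card) : F m) * Yv m ^ (-(k : ℤ))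
      = Yv m ^ ((m : ℤ) - k - S.card) := by
    rw [← zpow_natCast (Yv m) (m - S.card), ← zpow_add₀ hY]
    congr 1
    have hcard : S.card ≤ m := by simpa using Finset.card_le_univ S
    omega
  calc eX m m * aAlt m (fun i => cupW m (gAF m k μ S) (gBF m k ν S) i + deltaW m i)
        * Yv m ^ (m - S.card) * Yv m ^ (-(k : ℤ)) * (aAlt m (deltaW m))⁻¹
      = eX m m * (aAlt m (fun i => cupW m (gAF m k μ S) (gBF m k ν S) i + deltaW m i)
          * (aAlt m (deltaW m))⁻¹) * (Yv m ^ (m - S.card) * Yv m ^ (-(k : ℤ))) := by ring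
    _ = eX m m * (aAlt m (fun i => cupW m (gAF m k μ S) (gBF m k ν S) i + deltaW m i)
          * (aAlt m (deltaW m))⁻¹) * Yv m ^ ((m : ℤ) - k - S.card) := by rw [hYpow]
end
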